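/- Let k ≥ 1 and suppose 2k+1 = p^e for some prime p and integer e ≥ 1. Then every circulant matrix C(a_0,…,a_{2k}) of size (2k+1)×(2k+1) whose first row consists of exactly k entries equal to 1 and k+1 entries equal to 0 is nonsingular (has nonzero determinant). -/

import Mathlib

/-- The circulant matrix whose `(i,j)` entry is `a (j - i)` (indices mod `n`). -/
def circulantMat {n : ℕ} (a : Fin n → ℚ) : Matrix (Fin n) (Fin n) ℚ :=
  Matrix.of fun i j => a (j - i)

open Polynomial Matrix

/-- The cyclic shift matrix. -/
def shiftMat (n : ℕ) [NeZero n] (R : Type*) [CommRing R] : Matrix (Fin n) (Fin n) R :=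
  Matrix.of fun i j => if j = i + 1 then 1 else 0

open Fin.NatCast Fin.CommRing in
lemma shiftMat_pow {n : ℕ} [NeZero n] {R : Type*} [CommRing R] (m : ℕ) :
    (shiftMat n R) ^ m = Matrix.of fun i j => if j = i + (m : Fin n) then 1 else 0 := by
  induction m with
  | zero => ext i j; simp [Matrix.one_apply, eq_comm]
  | succ m ih =>
      ext i j
      rw [pow_succ, ih]
      simp only [Matrix.mul_apply, shiftMat, Matrix.of_apply]
      rw [Finset.sum_eq_single (i + (m : Fin n))]
      · rw [if_pos rfl, one_mul]
        have h1 : ((m + 1 : ℕ) : Fin n) = (m : Fin n) + 1 := by push_cast; ring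
        rw [h1, ← add_assoc]
      · intro b _ hb; rw [if_neg hb, zero_mul]
      · intro h; exact absurd (Finset.mem_univ _) h

open Fin.NatCast Fin.CommRing in
lemma aeval_shift_eq {n : ℕ} [NeZero n] {R : Type*} [CommRing R] (c : Fin n → R) :
    (Polynomial.aeval (shiftMat n R) (∑ t : Fin n, C (c t) * X ^ (t : ℕ)))
      = Matrix.of fun i j => c (j - i) := by
  rw [map_sum]
  have h : ∀ t : Fin n, Polynomial.aeval (shiftMat n R) (C (c t) * X ^ (t : ℕ))
      = c t • (shiftMat n R) ^ (t : ℕ) := by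
    intro t
    rw [_root_.map_mul, aeval_C, map_pow, aeval_X, Algebra.algebraMap_eq_smul_one,
      smul_mul_assoc, one_mul]
  ext i j
  simp_rw [h, shiftMat_pow]
  simp only [Matrix.sum_apply, Matrix.smul_apply, Matrix.of_apply, Fin.cast_val_eq_self,
    smul_ite, smul_zero, smul_eq_mul, mul_one]
  rw [Finset.sum_eq_single (j - i)]
  · have hji : j = i + (j - i) := by rw [add_comm, sub_add_cancel]
    simp [← hji]
  · intro b _ hb
    have hne : j ≠ i + b := fun hjb => hb (by rw [hjb, add_sub_cancel_left])
    simp [hne]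
  · intro h; exact absurd (Finset.mem_univ _) h

theorem stmt_4 (k p e : ℕ) (hk : 1 ≤ k) (hp : p.Prime) (he : 1 ≤ e)
    (hpe : 2 * k + 1 = p ^ e) (a : Fin (2 * k + 1) → ℚ)
    (ha : ∀ j, a j = 0 ∨ a j = 1)
    (hcard : (Finset.univ.filter fun j => a j = 1).card = k) :
    (circulantMat a).det ≠ 0 := by
  haveI : NeZero (2 * k + 1) := ⟨by omega⟩
  haveI : Fact p.Prime := ⟨hp⟩
  -- integer circulant matrix
  set Mz : Matrix (Fin (2 * k + 1)) (Fin (2 * k + 1)) ℤ :=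
    Matrix.of (fun i j => if a (j - i) = 1 then 1 else 0) with hMzdef
  have h1 : circulantMat a = Mz.map (Int.cast : ℤ → ℚ) := by
    ext i j
    simp only [circulantMat, Matrix.map_apply, Matrix.of_apply, hMzdef]
    rcases ha (j - i) with h | h <;> simp [h]
  have h2 : (circulantMat a).det = ((Mz.det : ℤ) : ℚ) := by
    rw [h1]
    simpa [RingHom.mapMatrix_apply] using (RingHom.map_det (Int.castRingHom ℚ) Mz).symm
  -- mod p matrix
  set c : Fin (2 * k + 1) → ZMod p := fun t => if a t = 1 then 1 else 0 with hc
  set Mp : Matrix (Fin (2 * k + 1)) (Fin (2 * k + 1)) (ZMod p) :=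
    Matrix.of (fun i j => c (j - i)) with hMpdef
  have h3 : Mz.map (Int.cast : ℤ → ZMod p) = Mp := by
    ext i j
    show ((if a (j - i) = 1 then (1 : ℤ) else 0 : ℤ) : ZMod p) = c (j - i)
    rw [hc]
    split <;> rename_i hcond <;> simp [hcond]
  have hdetp : ((Mz.det : ℤ) : ZMod p) = Mp.det := by
    rw [← h3]
    simpa [RingHom.mapMatrix_apply] using RingHom.map_det (Int.castRingHom (ZMod p)) Mz
  -- p does not divide k
  have hpk : ¬ p ∣ k := by
    intro hdvd
    have hd1 : p ∣ 2 * k + 1 := by rw [hpe]; exact dvd_pow_self p (by omega)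
    have hd2 : p ∣ 2 * k := hdvd.mul_left 2
    have hd3 : p ∣ 1 := by simpa using Nat.dvd_sub hd1 hd2
    exact absurd (Nat.dvd_one.mp hd3) hp.one_lt.ne'
  have hk0 : (k : ZMod p) ≠ 0 := fun h =>
    hpk ((ZMod.natCast_eq_zero_iff k p).mp h)
  -- polynomial realization
  set P := shiftMat (2 * k + 1) (ZMod p) with hP
  set F : (ZMod p)[X] := ∑ t : Fin (2 * k + 1), C (c t) * X ^ (t : ℕ) with hF
  have hMp : Polynomial.aeval P F = Mp := aeval_shift_eq c
  have hF1 : F.eval 1 = (k : ZMod p) := by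
    rw [hF, Polynomial.eval_finset_sum]
    simp only [eval_mul, eval_C, eval_pow, eval_X, one_pow, mul_one]
    rw [hc, Finset.sum_boole, hcard]
  obtain ⟨H, hH⟩ := Polynomial.X_sub_C_dvd_sub_C_eval (a := (1 : ZMod p)) (p := F)
  have hFdecomp : F = C (k : ZMod p) + (X - 1) * H := by
    rw [← hF1]
    rw [Polynomial.C_1] at hH
    linear_combination hH
  have hPn : P ^ (2 * k + 1) = 1 := by
    rw [hP, shiftMat_pow]
    ext i j
    simp [Matrix.one_apply, Fin.natCast_self, eq_comm]
  have hnil : IsNilpotent (Polynomial.aeval P ((X - 1) * H)) := by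
    refine ⟨2 * k + 1, ?_⟩
    rw [← map_pow, mul_pow]
    have hfd : (X - 1 : (ZMod p)[X]) ^ (2 * k + 1) = X ^ (2 * k + 1) - 1 := by
      rw [hpe]
      simpa using sub_pow_char_pow (R := (ZMod p)[X]) (x := X) (y := 1) (p := p) (n := e)
    rw [hfd, _root_.map_mul, map_sub, map_pow, aeval_X, _root_.map_one, hPn, sub_self, zero_mul]
  have hcomm : Commute (Polynomial.aeval P ((X - 1) * H))
      (Polynomial.aeval P (C (k : ZMod p))) :=
    (Commute.all ((X - 1) * H : (ZMod p)[X]) (C (k : ZMod p))).map (Polynomial.aeval P)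
  have hunit : IsUnit Mp := by
    rw [← hMp, hFdecomp, map_add]
    refine IsNilpotent.isUnit_add_left_of_commute hnil ?_ hcomm
    rw [aeval_C]
    exact (isUnit_iff_ne_zero.mpr hk0).map
      (algebraMap (ZMod p) (Matrix (Fin (2 * k + 1)) (Fin (2 * k + 1)) (ZMod p)))
  have hdMp : Mp.det ≠ 0 := ((Matrix.isUnit_iff_isUnit_det Mp).mp hunit).ne_zero
  have hMzdet : Mz.det ≠ 0 := by
    intro h
    rw [h] at hdetp
    simp only [Int.cast_zero] at hdetp
    exact hdMp hdetp.symm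
  rw [h2]
  exact_mod_cast hMzdet
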